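/- Let S be a constant rich subsemigroup of P(X), let α, β ∈ S with α ≠ 0, and let φ ∈ S¹ (that is, φ ∈ S or φ = id_X). Then αφ = φβ with φ ∈ 𝔓¹(α) if and only if φ is an rp-homomorphism from Γ(α) to Γ(β). -/

import Mathlib

namespace ConjPaper

open Classical

/-- Partial transformations of `X`. -/
abbrev PT (X : Type*) := X → Option X

variable {X : Type*}

/-- Left-to-right composition: `x(αφ) = (xα)φ`. -/
def pcomp (α φ : PT X) : PT X := fun x => (α x).bind φ

/-- The zero of `P(X)`: the empty transformation. -/
def pzero : PT X := fun _ => none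

/-- The identity of `P(X)`. -/
def pid : PT X := fun x => some x

/-- The domain of a partial transformation. -/
def pdom (α : PT X) : Set X := {x | α x ≠ none}

/-- The image of a partial transformation. -/
def pim (α : PT X) : Set X := {y | ∃ x, α x = some y}

/-- The span: `dom(α) ∪ im(α)`. -/
def pspan (α : PT X) : Set X := pdom α ∪ pim α

/-- Iterates `γ^k` of a partial transformation (`γ^0 = id`). -/
def pit (α : PT X) : ℕ → PT X
  | 0 => pid
  | n + 1 => pcomp (pit α n) α

/-- `φ` is a restrictive partial homomorphism (rp-homomorphism) from `Γ(α)` to `Γ(β)`: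
(a) every arc `x → y` of `Γ(α)` has `x, y ∈ dom(φ)` and `xφ → yφ` an arc of `Γ(β)`;
(b) if `x` is terminal in `Γ(α)` and `x ∈ dom(φ)`, then `xφ` is terminal in `Γ(β)`. -/
def IsRpHom (α β φ : PT X) : Prop :=
  (∀ x y, α x = some y →
    ∃ x' y', φ x = some x' ∧ φ y = some y' ∧ β x' = some y') ∧
  (∀ x x', α x = none → φ x = some x' → β x' = none)

/-- `S ⊆ P(X)` is a subsemigroup if it is closed under composition. -/
def IsSubsemigroupPT (S : Set (PT X)) : Prop := ∀ α ∈ S, ∀ β ∈ S, pcomp α β ∈ S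

/-- `S` is constant rich if for every `x ∈ X` there is `α ∈ S` with `im(α) = {x}`. -/
def ConstRich (S : Set (PT X)) : Prop := ∀ x : X, ∃ α ∈ S, pim α = {x}

/-- The left principal ideal `S¹α = {α} ∪ Sα`. -/
def leftIdeal (S : Set (PT X)) (α : PT X) : Set (PT X) :=
  {β | β = α ∨ ∃ μ ∈ S, β = pcomp μ α}

/-- `𝔓¹(α)`: for `α ≠ 0`, the set `𝔓(α) ∪ {1}` where
`𝔓(α) = {g ∈ S : (μα)g ≠ 0 for every μα ∈ S¹α with μα ≠ 0}`; and `𝔓¹(0) = {0} ∪ {1}`.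
(When `S` has no zero, i.e. `pzero ∉ S`, this set provably equals `S¹ = S ∪ {1}`.) -/
noncomputable def Pfrak1 (S : Set (PT X)) (α : PT X) : Set (PT X) :=
  (if α = pzero then {pzero}
   else {g ∈ S | ∀ β ∈ leftIdeal S α, β ≠ pzero → pcomp β g ≠ pzero}) ∪ {pid}

/-- Lemma 3.7. Let `S` be a constant rich subsemigroup of `P(X)`,
`α, β ∈ S` with `α ≠ 0`, and `φ ∈ S¹` (that is, `φ ∈ S` or `φ = id_X`). Then
`αφ = φβ` with `φ ∈ 𝔓¹(α)` if and only if `φ` is an rp-homomorphism from `Γ(α)` to `Γ(β)`. -/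
theorem pcomp_eq_and_mem_Pfrak1_iff_isRpHom [Nonempty X] (S : Set (PT X))
    (hS : IsSubsemigroupPT S) (hCR : ConstRich S)
    (α β : PT X) (hαS : α ∈ S) (hβS : β ∈ S) (hα0 : α ≠ pzero)
    (φ : PT X) (hφ : φ ∈ S ∨ φ = pid) :
    (pcomp α φ = pcomp φ β ∧ φ ∈ Pfrak1 S α) ↔ IsRpHom α β φ := by
  constructor
  · rintro ⟨heq, hP⟩
    rcases hP with hP | hP
    · rw [if_neg hα0] at hP
      obtain ⟨hφS, hcond⟩ := hP
      constructor
      · intro x y hxy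
        obtain ⟨μ, hμS, hμim⟩ := hCR x
        obtain ⟨z, hz⟩ : ∃ z, μ z = some x := by
          have : x ∈ pim μ := by rw [hμim]; rfl
          exact this
        have hmem : pcomp μ α ∈ leftIdeal S α := Or.inr ⟨μ, hμS, rfl⟩
        have hne : pcomp μ α ≠ pzero := by
          intro h
          have := congrFun h z
          simp [pcomp, pzero, hz, hxy] at this
        have hnz := hcond _ hmem hne
        obtain ⟨w, hw⟩ : ∃ w, pcomp (pcomp μ α) φ w ≠ none := by
          by_contra h
          push_neg at h
          exact hnz (funext h)
        have hμw : μ w = some x := by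
          cases hmw : μ w with
          | none => simp [pcomp, hmw] at hw
          | some u =>
            have hu : u ∈ pim μ := ⟨w, hmw⟩
            rw [hμim] at hu
            exact congrArg some hu
        have hφy : φ y ≠ none := by
          simpa [pcomp, hμw, hxy] using hw
        obtain ⟨y', hy'⟩ := Option.ne_none_iff_exists'.mp hφy
        have h2 := congrFun heq x
        simp only [pcomp, hxy, hy', Option.bind_some] at h2
        cases hφx : φ x with
        | none => rw [hφx] at h2; simp at h2
        | some x' =>
          rw [hφx] at h2
          exact ⟨x', y', rfl, hy', h2.symm⟩
      · intro x x' hx hφx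
        have h2 := congrFun heq x
        simp only [pcomp, hx, hφx, Option.bind_none, Option.bind_some] at h2
        exact h2.symm
    · have hpid : φ = pid := hP
      have heq' : α = β := by
        have h1 : pcomp α pid = α := by
          funext x; cases h : α x <;> simp [pcomp, pid, h]
        have h2 : pcomp pid β = β := by funext x; simp [pcomp, pid]
        rw [hpid, h1, h2] at heq; exact heq
      subst hpid
      constructor
      · intro x y hxy
        exact ⟨x, y, rfl, rfl, heq' ▸ hxy⟩
      · intro x x' hx hφx
        have : x' = x := by simpa [pid] using hφx.symm
        subst this
        exact heq' ▸ hx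
  · rintro ⟨ha, hb⟩
    have heq : pcomp α φ = pcomp φ β := by
      funext x
      cases hx : α x with
      | none =>
        cases hφx : φ x with
        | none => simp [pcomp, hx, hφx]
        | some x' => simp [pcomp, hx, hφx, hb x x' hx hφx]
      | some y =>
        obtain ⟨x', y', h1, h2, h3⟩ := ha x y hx
        simp [pcomp, hx, h1, h2, h3]
    refine ⟨heq, ?_⟩
    rcases hφ with hφS | hpid
    · left
      rw [if_neg hα0]
      refine ⟨hφS, ?_⟩
      intro γ hγ hγ0 h
      obtain ⟨z, w, hzw, u, hu⟩ : ∃ z w, γ z = some w ∧ ∃ u, α u = some w := by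
        rcases hγ with rfl | ⟨μ, hμS, rfl⟩
        · obtain ⟨z, hz⟩ : ∃ z, γ z ≠ none := by
            by_contra hc; push_neg at hc; exact hγ0 (funext hc)
          obtain ⟨w, hw⟩ := Option.ne_none_iff_exists'.mp hz
          exact ⟨z, w, hw, z, hw⟩
        · obtain ⟨z, hz⟩ : ∃ z, pcomp μ α z ≠ none := by
            by_contra hc; push_neg at hc; exact hγ0 (funext hc)
          obtain ⟨w, hw⟩ := Option.ne_none_iff_exists'.mp hz
          cases hmz : μ z with
          | none => rw [show pcomp μ α z = none by simp [pcomp, hmz]] at hw; exact absurd hw (by simp)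
          | some u =>
            refine ⟨z, w, hw, u, ?_⟩
            have : pcomp μ α z = α u := by simp [pcomp, hmz]
            rw [this] at hw; exact hw
      obtain ⟨x', y', h1, h2, h3⟩ := ha u w hu
      have := congrFun h z
      simp [pcomp, pzero, hzw, h2] at this
    · right; exact hpid


end ConjPaper
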